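/- There is an absolute constant C > 0 such that uniformly for all u ∈ [0, 1], all α ∈ (0, 1), and all δ > 0: sin(πα) · ∫_{[u−δ, u+δ] ∩ [0,1]} t^{α−1} (1 − t)^{−α} dt ≤ C · δ / ( (u + δ)^{1−α} · (1 − u + δ)^{α} ). -/

import Mathlib

open Real MeasureTheory Set

private lemma rpow_le_two' {x β : ℝ} (hx : 1/2 ≤ x) (hβ1 : -1 ≤ β) (hβ0 : β ≤ 0) :
    x ^ β ≤ 2 := by
  calc x ^ β ≤ (1/2 : ℝ) ^ β := Real.rpow_le_rpow_of_nonpos (by norm_num) hx hβ0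
    _ ≤ (1/2 : ℝ) ^ (-1 : ℝ) := Real.rpow_le_rpow_of_exponent_ge (by norm_num) (by norm_num) hβ1
    _ = 2 := by rw [Real.rpow_neg_one]; norm_num

private lemma bern' {α r s : ℝ} (hα0 : 0 ≤ α) (hα1 : α ≤ 1) (hr : 0 < r) (hrs : r ≤ s) :
    s ^ α - r ^ α ≤ α * r ^ (α - 1) * (s - r) := by
  have hx : (-1 : ℝ) ≤ (s - r) / r := by
    have : 0 ≤ (s - r) / r := div_nonneg (by linarith) hr.le
    linarith
  have h := rpow_one_add_le_one_add_mul_self hx hα0 hα1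
  have h1 : (1 : ℝ) + (s - r) / r = s / r := by field_simp; ring
  rw [h1, Real.div_rpow (le_trans hr.le hrs) hr.le] at h
  have hrα : 0 < r ^ α := Real.rpow_pos_of_pos hr α
  have h2 : s ^ α ≤ (1 + α * ((s - r) / r)) * r ^ α := (div_le_iff₀ hrα).mp h
  have h3 : (1 + α * ((s - r) / r)) * r ^ α = r ^ α + α * r ^ (α - 1) * (s - r) := by
    rw [Real.rpow_sub hr, Real.rpow_one]
    field_simp
  linarith [h3 ▸ h2]

private lemma lemA' {α u δ : ℝ} (hα0 : 0 < α) (hα1 : α < 1) (hu : 0 ≤ u) (hδ : 0 < δ) :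
    min (u + δ) 1 ^ α - max (u - δ) 0 ^ α ≤ 4 * δ * (u + δ) ^ (α - 1) := by
  have hs : 0 < u + δ := by linarith
  have hbs : min (u + δ) 1 ^ α ≤ (u + δ) ^ α :=
    Real.rpow_le_rpow (le_min (by linarith) zero_le_one) (min_le_left _ _) hα0.le
  rcases le_or_gt u (3 * δ) with hc | hc
  · have hmax : (0:ℝ) ≤ max (u - δ) 0 ^ α := Real.rpow_nonneg (le_max_right _ _) α
    have h2 : (u + δ) ^ α = (u + δ) ^ (α - 1) * (u + δ) := by
      rw [← Real.rpow_add_one (ne_of_gt hs)]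
      ring_nf
    have h3 : (u + δ) ^ (α - 1) * (u + δ) ≤ (u + δ) ^ (α - 1) * (4 * δ) :=
      mul_le_mul_of_nonneg_left (by linarith) (Real.rpow_nonneg hs.le _)
    calc min (u + δ) 1 ^ α - max (u - δ) 0 ^ α ≤ (u + δ) ^ α := by linarith
      _ = (u + δ) ^ (α - 1) * (u + δ) := h2
      _ ≤ (u + δ) ^ (α - 1) * (4 * δ) := h3
      _ = 4 * δ * (u + δ) ^ (α - 1) := by ring
  · have hr : 0 < u - δ := by linarith
    have hmax : max (u - δ) 0 = u - δ := max_eq_left hr.le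
    have hb := bern' hα0.le hα1.le hr (show u - δ ≤ u + δ by linarith)
    have h4 : (u - δ) ^ (α - 1) ≤ ((u + δ) / 2) ^ (α - 1) :=
      Real.rpow_le_rpow_of_nonpos (by linarith) (by linarith) (by linarith)
    have h5 : ((u + δ) / 2 : ℝ) ^ (α - 1) = (u + δ) ^ (α - 1) / 2 ^ (α - 1) :=
      Real.div_rpow hs.le (by norm_num : (0:ℝ) ≤ 2) (α - 1)
    have h6 : (1 : ℝ) / 2 ≤ (2 : ℝ) ^ (α - 1) := by
      have := Real.rpow_le_rpow_of_exponent_le one_le_two (show (-1:ℝ) ≤ α - 1 by linarith)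
      rwa [Real.rpow_neg_one, ← one_div] at this
    have h2p : (0:ℝ) < 2 ^ (α - 1) := Real.rpow_pos_of_pos (by norm_num) _
    have hsn : (0:ℝ) ≤ (u + δ) ^ (α - 1) := Real.rpow_nonneg hs.le _
    have h7 : (u + δ) ^ (α - 1) / 2 ^ (α - 1) ≤ 2 * (u + δ) ^ (α - 1) := by
      rw [div_le_iff₀ h2p]
      nlinarith
    have hchain : (u - δ) ^ (α - 1) ≤ 2 * (u + δ) ^ (α - 1) := by
      calc (u - δ) ^ (α - 1) ≤ ((u + δ) / 2) ^ (α - 1) := h4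
        _ = (u + δ) ^ (α - 1) / 2 ^ (α - 1) := h5
        _ ≤ 2 * (u + δ) ^ (α - 1) := h7
    have hrn : (0:ℝ) ≤ (u - δ) ^ (α - 1) := Real.rpow_nonneg hr.le _
    rw [hmax]
    have e : u + δ - (u - δ) = 2 * δ := by ring
    rw [e] at hb
    have t1 : α * (u - δ) ^ (α - 1) ≤ 2 * (u + δ) ^ (α - 1) := by
      nlinarith [mul_le_mul_of_nonneg_right hα1.le hrn]
    have t2 : α * (u - δ) ^ (α - 1) * (2 * δ) ≤ 2 * (u + δ) ^ (α - 1) * (2 * δ) :=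
      mul_le_mul_of_nonneg_right t1 (by positivity)
    nlinarith [hbs, hb]

private lemma intg1' {α a b : ℝ} (hα0 : 0 < α) :
    IntegrableOn (fun t : ℝ => t ^ (α - 1)) (Icc a b) := by
  rw [integrableOn_Icc_iff_integrableOn_Ioc]
  exact (intervalIntegral.intervalIntegrable_rpow' (by linarith : (-1:ℝ) < α - 1)).1

private lemma intg2' {α a b : ℝ} (hα1 : α < 1) :
    IntegrableOn (fun t : ℝ => (1 - t) ^ (-α)) (Icc a b) := by
  rw [integrableOn_Icc_iff_integrableOn_Ioc]
  have h : IntervalIntegrable (fun x : ℝ => x ^ (-α)) volume (1 - a) (1 - b) :=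
    intervalIntegral.intervalIntegrable_rpow' (by linarith)
  have h2 := h.comp_sub_left 1
  simp only [sub_sub_cancel] at h2
  exact h2.1

private lemma int1' {α a b : ℝ} (hα0 : 0 < α) (hab : a ≤ b) :
    ∫ t in Icc a b, t ^ (α - 1) = (b ^ α - a ^ α) / α := by
  rw [integral_Icc_eq_integral_Ioc, ← intervalIntegral.integral_of_le hab,
    integral_rpow (Or.inl (by linarith : (-1:ℝ) < α - 1))]
  rw [show α - 1 + 1 = α by ring]

private lemma int2' {α a b : ℝ} (hα1 : α < 1) (hab : a ≤ b) :
    ∫ t in Icc a b, (1 - t) ^ (-α) = ((1 - a) ^ (1 - α) - (1 - b) ^ (1 - α)) / (1 - α) := by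
  rw [integral_Icc_eq_integral_Ioc, ← intervalIntegral.integral_of_le hab]
  rw [intervalIntegral.integral_comp_sub_left (fun x : ℝ => x ^ (-α)) 1,
    integral_rpow (Or.inl (by linarith : (-1:ℝ) < -α))]
  rw [show -α + 1 = 1 - α by ring]

private lemma intf' {α a b : ℝ} (hα0 : 0 < α) (hα1 : α < 1) (ha : 0 ≤ a) (hb : b ≤ 1) :
    IntegrableOn (fun t : ℝ => t ^ (α - 1) * (1 - t) ^ (-α)) (Icc a b) := by
  have hg : IntegrableOn (fun t : ℝ => 2 * t ^ (α - 1) + 2 * (1 - t) ^ (-α)) (Icc a b) :=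
    ((intg1' hα0).const_mul 2).add ((intg2' hα1).const_mul 2)
  refine Integrable.mono hg ?_ ?_
  · apply Measurable.aestronglyMeasurable
    fun_prop
  · filter_upwards [ae_restrict_mem measurableSet_Icc] with t ht
    have ht0 : 0 ≤ t := le_trans ha ht.1
    have ht1 : t ≤ 1 := le_trans ht.2 hb
    have h1 : 0 ≤ t ^ (α - 1) := Real.rpow_nonneg ht0 _
    have h2 : 0 ≤ (1 - t) ^ (-α) := Real.rpow_nonneg (by linarith) _
    rw [Real.norm_of_nonneg (mul_nonneg h1 h2),
      Real.norm_of_nonneg (by linarith : (0:ℝ) ≤ 2 * t ^ (α - 1) + 2 * (1 - t) ^ (-α))]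
    rcases le_total t (1/2) with h | h
    · have := rpow_le_two' (β := -α) (show 1/2 ≤ 1 - t by linarith) (by linarith) (by linarith)
      nlinarith
    · have := rpow_le_two' (β := α - 1) h (by linarith) (by linarith)
      nlinarith

set_option maxHeartbeats 1000000 in
theorem beta_integral_estimate :
    ∃ C : ℝ, 0 < C ∧
      ∀ u α δ : ℝ, 0 ≤ u → u ≤ 1 → 0 < α → α < 1 → 0 < δ →
        Real.sin (Real.pi * α) *
            ∫ t in Set.Icc (u - δ) (u + δ) ∩ Set.Icc (0 : ℝ) 1,
              t ^ (α - 1) * (1 - t) ^ (-α)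
          ≤ C * δ / ((u + δ) ^ (1 - α) * (1 - u + δ) ^ α) := by
  refine ⟨32 * Real.pi, by positivity, fun u α δ hu0 hu1 hα0 hα1 hδ => ?_⟩
  have hπ := Real.pi_pos
  set a := max (u - δ) 0 with ha_def
  set b := min (u + δ) 1 with hb_def
  have ha0 : 0 ≤ a := le_max_right _ _
  have hb1 : b ≤ 1 := min_le_right _ _
  have hab : a ≤ b := max_le (le_min (by linarith) (by linarith)) (le_min (by linarith) zero_le_one)
  have hset : Icc (u - δ) (u + δ) ∩ Icc (0:ℝ) 1 = Icc a b := by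
    rw [Set.Icc_inter_Icc]
  rw [hset]
  have hfint := intf' (a := a) (b := b) hα0 hα1 ha0 hb1
  have hsplit := integral_inter_add_diff (μ := volume) (s := Icc a b)
    (measurableSet_Iic (a := (1/2:ℝ))) hfint
  have haα : a ^ α ≤ b ^ α := Real.rpow_le_rpow ha0 hab hα0.le
  have hbB : (1 - b) ^ (1 - α) ≤ (1 - a) ^ (1 - α) :=
    Real.rpow_le_rpow (by linarith) (by linarith) (by linarith)
  -- piece 1
  have hA : (∫ t in Icc a b ∩ Iic (1/2 : ℝ), t ^ (α - 1) * (1 - t) ^ (-α))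
      ≤ 2 * ((b ^ α - a ^ α) / α) := by
    have hg : IntegrableOn (fun t : ℝ => 2 * t ^ (α - 1)) (Icc a b) := (intg1' hα0).const_mul 2
    calc (∫ t in Icc a b ∩ Iic (1/2 : ℝ), t ^ (α - 1) * (1 - t) ^ (-α))
        ≤ ∫ t in Icc a b ∩ Iic (1/2 : ℝ), 2 * t ^ (α - 1) := by
          refine setIntegral_mono_on (hfint.mono_set inter_subset_left)
            (hg.mono_set inter_subset_left)
            (measurableSet_Icc.inter measurableSet_Iic) (fun t ht => ?_)
          have ht0 : 0 ≤ t := le_trans ha0 ht.1.1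
          have ht2 : t ≤ 1/2 := ht.2
          have h1 : 0 ≤ t ^ (α - 1) := Real.rpow_nonneg ht0 _
          have h2 : (1 - t) ^ (-α) ≤ 2 :=
            rpow_le_two' (β := -α) (by linarith) (by linarith) (by linarith)
          nlinarith
      _ ≤ ∫ t in Icc a b, 2 * t ^ (α - 1) := by
          refine setIntegral_mono_set hg ?_ (HasSubset.Subset.eventuallyLE inter_subset_left)
          filter_upwards [ae_restrict_mem measurableSet_Icc] with t ht
          have ht0 : 0 ≤ t := le_trans ha0 ht.1
          have := Real.rpow_nonneg ht0 (α - 1)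
          simp only [Pi.zero_apply]
          linarith
      _ = 2 * ((b ^ α - a ^ α) / α) := by
          rw [integral_const_mul, int1' hα0 hab]
  -- piece 2
  have hB : (∫ t in Icc a b \ Iic (1/2 : ℝ), t ^ (α - 1) * (1 - t) ^ (-α))
      ≤ 2 * (((1 - a) ^ (1 - α) - (1 - b) ^ (1 - α)) / (1 - α)) := by
    have hg : IntegrableOn (fun t : ℝ => 2 * (1 - t) ^ (-α)) (Icc a b) := (intg2' hα1).const_mul 2
    calc (∫ t in Icc a b \ Iic (1/2 : ℝ), t ^ (α - 1) * (1 - t) ^ (-α))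
        ≤ ∫ t in Icc a b \ Iic (1/2 : ℝ), 2 * (1 - t) ^ (-α) := by
          refine setIntegral_mono_on (hfint.mono_set diff_subset)
            (hg.mono_set diff_subset)
            (measurableSet_Icc.diff measurableSet_Iic) (fun t ht => ?_)
          obtain ⟨ht1, ht2⟩ := ht
          simp only [mem_Iic, not_le] at ht2
          have htb : t ≤ 1 := le_trans ht1.2 hb1
          have h2 : 0 ≤ (1 - t) ^ (-α) := Real.rpow_nonneg (by linarith) _
          have h1 : t ^ (α - 1) ≤ 2 :=
            rpow_le_two' (β := α - 1) (by linarith) (by linarith) (by linarith)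
          nlinarith
      _ ≤ ∫ t in Icc a b, 2 * (1 - t) ^ (-α) := by
          refine setIntegral_mono_set hg ?_ (HasSubset.Subset.eventuallyLE diff_subset)
          filter_upwards [ae_restrict_mem measurableSet_Icc] with t ht
          have : 0 ≤ (1 - t) ^ (-α) := Real.rpow_nonneg (by linarith [ht.2, hb1]) _
          simp only [Pi.zero_apply]
          linarith
      _ = 2 * (((1 - a) ^ (1 - α) - (1 - b) ^ (1 - α)) / (1 - α)) := by
          rw [integral_const_mul, int2' hα1 hab]
  have hI : (∫ t in Icc a b, t ^ (α - 1) * (1 - t) ^ (-α))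
      ≤ 2 * ((b ^ α - a ^ α) / α) + 2 * (((1 - a) ^ (1 - α) - (1 - b) ^ (1 - α)) / (1 - α)) := by
    rw [← hsplit]
    exact add_le_add hA hB
  -- sine bounds
  have hsin0 : 0 ≤ Real.sin (Real.pi * α) :=
    Real.sin_nonneg_of_nonneg_of_le_pi (by positivity) (by nlinarith)
  have hsin1 : Real.sin (Real.pi * α) ≤ Real.pi * α := Real.sin_le (by positivity)
  have hsin2 : Real.sin (Real.pi * α) ≤ Real.pi * (1 - α) := by
    calc Real.sin (Real.pi * α) = Real.sin (Real.pi - Real.pi * α) := by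
          rw [Real.sin_pi_sub]
      _ ≤ Real.pi - Real.pi * α := Real.sin_le (by nlinarith)
      _ = Real.pi * (1 - α) := by ring
  -- master bound
  have hIb : Real.sin (Real.pi * α) * (∫ t in Icc a b, t ^ (α - 1) * (1 - t) ^ (-α))
      ≤ 2 * Real.pi * (b ^ α - a ^ α)
        + 2 * Real.pi * ((1 - a) ^ (1 - α) - (1 - b) ^ (1 - α)) := by
    have hQ1 : (0:ℝ) ≤ 2 * ((b ^ α - a ^ α) / α) := by
      have : (0:ℝ) ≤ (b ^ α - a ^ α) / α := div_nonneg (by linarith) hα0.le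
      linarith
    have hQ2 : (0:ℝ) ≤ 2 * (((1 - a) ^ (1 - α) - (1 - b) ^ (1 - α)) / (1 - α)) := by
      have : (0:ℝ) ≤ ((1 - a) ^ (1 - α) - (1 - b) ^ (1 - α)) / (1 - α) :=
        div_nonneg (by linarith) (by linarith)
      linarith
    have step := mul_le_mul_of_nonneg_left hI hsin0
    rw [mul_add] at step
    have e1 : Real.sin (Real.pi * α) * (2 * ((b ^ α - a ^ α) / α))
        ≤ 2 * Real.pi * (b ^ α - a ^ α) := by
      calc Real.sin (Real.pi * α) * (2 * ((b ^ α - a ^ α) / α))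
          ≤ (Real.pi * α) * (2 * ((b ^ α - a ^ α) / α)) :=
            mul_le_mul_of_nonneg_right hsin1 hQ1
        _ = 2 * Real.pi * (b ^ α - a ^ α) := by
            field_simp
    have e2 : Real.sin (Real.pi * α) * (2 * (((1 - a) ^ (1 - α) - (1 - b) ^ (1 - α)) / (1 - α)))
        ≤ 2 * Real.pi * ((1 - a) ^ (1 - α) - (1 - b) ^ (1 - α)) := by
      calc Real.sin (Real.pi * α) * (2 * (((1 - a) ^ (1 - α) - (1 - b) ^ (1 - α)) / (1 - α)))
          ≤ (Real.pi * (1 - α)) * (2 * (((1 - a) ^ (1 - α) - (1 - b) ^ (1 - α)) / (1 - α))) :=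
            mul_le_mul_of_nonneg_right hsin2 hQ2
        _ = 2 * Real.pi * ((1 - a) ^ (1 - α) - (1 - b) ^ (1 - α)) := by
            have h1α : (1:ℝ) - α ≠ 0 := by linarith
            field_simp
    linarith
  have hs1 : (0:ℝ) < u + δ := by linarith
  have hw1 : (0:ℝ) < 1 - u + δ := by linarith
  have hD : (0:ℝ) < (u + δ) ^ (1 - α) * (1 - u + δ) ^ α := by positivity
  rw [le_div_iff₀ hD]
  rcases le_or_gt δ 1 with hδ1 | hδ1
  · -- small δ
    have k1 : b ^ α - a ^ α ≤ 4 * δ * (u + δ) ^ (α - 1) := lemA' hα0 hα1 hu0 hδ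
    have k2 : (1 - a) ^ (1 - α) - (1 - b) ^ (1 - α) ≤ 4 * δ * (1 - u + δ) ^ (-α) := by
      have h := lemA' (show 0 < 1 - α by linarith) (show 1 - α < 1 by linarith)
        (show 0 ≤ 1 - u by linarith) hδ
      have e1 : (1:ℝ) - a = min (1 - u + δ) 1 := by
        rcases le_total (u - δ) 0 with h' | h'
        · rw [ha_def, max_eq_right h', min_eq_right (by linarith : (1:ℝ) ≤ 1 - u + δ)]
          norm_num
        · rw [ha_def, max_eq_left h', min_eq_left (by linarith)]
          ring
      have e2 : (1:ℝ) - b = max (1 - u - δ) 0 := by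
        rcases le_total (u + δ) 1 with h' | h'
        · rw [hb_def, min_eq_left h', max_eq_left (by linarith)]
          ring
        · rw [hb_def, min_eq_right h', max_eq_right (by linarith)]
          norm_num
      rw [show 1 - α - 1 = -α by ring] at h
      rw [e1, e2]
      convert h using 3
    have m1 : (u + δ) ^ (α - 1) * ((u + δ) ^ (1 - α) * (1 - u + δ) ^ α) = (1 - u + δ) ^ α := by
      rw [← mul_assoc, ← Real.rpow_add hs1, show α - 1 + (1 - α) = 0 by ring,
        Real.rpow_zero, one_mul]
    have m2 : (1 - u + δ) ^ (-α) * ((u + δ) ^ (1 - α) * (1 - u + δ) ^ α) = (u + δ) ^ (1 - α) := by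
      rw [mul_comm ((u + δ) ^ (1 - α)) ((1 - u + δ) ^ α), ← mul_assoc,
        ← Real.rpow_add hw1, show -α + α = 0 by ring, Real.rpow_zero, one_mul]
    have m3 : (1 - u + δ) ^ α ≤ 2 := by
      calc (1 - u + δ) ^ α ≤ (2:ℝ) ^ α := Real.rpow_le_rpow hw1.le (by linarith) hα0.le
        _ ≤ (2:ℝ) ^ (1:ℝ) := Real.rpow_le_rpow_of_exponent_le one_le_two hα1.le
        _ = 2 := Real.rpow_one 2
    have m4 : (u + δ) ^ (1 - α) ≤ 2 := by
      calc (u + δ) ^ (1 - α) ≤ (2:ℝ) ^ (1 - α) :=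
            Real.rpow_le_rpow hs1.le (by linarith) (by linarith)
        _ ≤ (2:ℝ) ^ (1:ℝ) := Real.rpow_le_rpow_of_exponent_le one_le_two (by linarith)
        _ = 2 := Real.rpow_one 2
    have hstep : Real.sin (Real.pi * α) * (∫ t in Icc a b, t ^ (α - 1) * (1 - t) ^ (-α))
        ≤ 8 * Real.pi * δ * (u + δ) ^ (α - 1) + 8 * Real.pi * δ * (1 - u + δ) ^ (-α) := by
      have c1 : 2 * Real.pi * (b ^ α - a ^ α) ≤ 2 * Real.pi * (4 * δ * (u + δ) ^ (α - 1)) :=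
        mul_le_mul_of_nonneg_left k1 (by positivity)
      have c2 : 2 * Real.pi * ((1 - a) ^ (1 - α) - (1 - b) ^ (1 - α))
          ≤ 2 * Real.pi * (4 * δ * (1 - u + δ) ^ (-α)) :=
        mul_le_mul_of_nonneg_left k2 (by positivity)
      calc Real.sin (Real.pi * α) * (∫ t in Icc a b, t ^ (α - 1) * (1 - t) ^ (-α))
          ≤ 2 * Real.pi * (b ^ α - a ^ α)
            + 2 * Real.pi * ((1 - a) ^ (1 - α) - (1 - b) ^ (1 - α)) := hIb
        _ ≤ 2 * Real.pi * (4 * δ * (u + δ) ^ (α - 1))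
            + 2 * Real.pi * (4 * δ * (1 - u + δ) ^ (-α)) := add_le_add c1 c2
        _ = 8 * Real.pi * δ * (u + δ) ^ (α - 1) + 8 * Real.pi * δ * (1 - u + δ) ^ (-α) := by
            ring
    have hfin := mul_le_mul_of_nonneg_right hstep hD.le
    have expand : (8 * Real.pi * δ * (u + δ) ^ (α - 1) + 8 * Real.pi * δ * (1 - u + δ) ^ (-α))
          * ((u + δ) ^ (1 - α) * (1 - u + δ) ^ α)
        = 8 * Real.pi * δ * ((u + δ) ^ (α - 1) * ((u + δ) ^ (1 - α) * (1 - u + δ) ^ α))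
          + 8 * Real.pi * δ * ((1 - u + δ) ^ (-α) * ((u + δ) ^ (1 - α) * (1 - u + δ) ^ α)) := by
      ring
    rw [expand, m1, m2] at hfin
    have c3 : 8 * Real.pi * δ * (1 - u + δ) ^ α ≤ 8 * Real.pi * δ * 2 :=
      mul_le_mul_of_nonneg_left m3 (by positivity)
    have c4 : 8 * Real.pi * δ * (u + δ) ^ (1 - α) ≤ 8 * Real.pi * δ * 2 :=
      mul_le_mul_of_nonneg_left m4 (by positivity)
    linarith [hfin, c3, c4]
  · -- large δ
    have k1 : b ^ α ≤ 1 := Real.rpow_le_one (by linarith) hb1 hα0.le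
    have k2 : (1 - a) ^ (1 - α) ≤ 1 := by
      have haa : a ≤ 1 := le_trans hab hb1
      exact Real.rpow_le_one (by linarith) (by linarith) (by linarith)
    have k3 : 0 ≤ a ^ α := Real.rpow_nonneg ha0 _
    have k4 : 0 ≤ (1 - b) ^ (1 - α) := Real.rpow_nonneg (by linarith) _
    have hs4 : Real.sin (Real.pi * α) * (∫ t in Icc a b, t ^ (α - 1) * (1 - t) ^ (-α))
        ≤ 4 * Real.pi := by
      have c1 : 2 * Real.pi * (b ^ α - a ^ α) ≤ 2 * Real.pi * 1 :=
        mul_le_mul_of_nonneg_left (by linarith) (by positivity)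
      have c2 : 2 * Real.pi * ((1 - a) ^ (1 - α) - (1 - b) ^ (1 - α)) ≤ 2 * Real.pi * 1 :=
        mul_le_mul_of_nonneg_left (by linarith) (by positivity)
      linarith
    have hDle : (u + δ) ^ (1 - α) * (1 - u + δ) ^ α ≤ 1 + δ := by
      have d1 : (u + δ) ^ (1 - α) ≤ (1 + δ) ^ (1 - α) :=
        Real.rpow_le_rpow (by linarith) (by linarith) (by linarith)
      have d2 : (1 - u + δ) ^ α ≤ (1 + δ) ^ α :=
        Real.rpow_le_rpow (by linarith) (by linarith) hα0.le
      calc (u + δ) ^ (1 - α) * (1 - u + δ) ^ α ≤ (1 + δ) ^ (1 - α) * (1 + δ) ^ α :=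
          mul_le_mul d1 d2 (Real.rpow_nonneg (by linarith) _) (Real.rpow_nonneg (by linarith) _)
        _ = (1 + δ) ^ ((1 - α) + α) := (Real.rpow_add (by linarith) _ _).symm
        _ = 1 + δ := by rw [show (1 - α) + α = 1 by ring, Real.rpow_one]
    have hmul := mul_le_mul hs4 hDle hD.le (by positivity)
    nlinarith [hmul, hπ, hδ1]
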